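/- Let A be a T×m matrix over a finite field F and let b ∈ F^m. Fix an index q ∈ [m] and a set S ⊆ [m]\{q}. Then b_q can be recovered from the vector Ab together with the entries b_i for i ∈ S (i.e., there is a function of (Ab, b_S) equal to b_q for all b) if and only if the column A_q does not lie in the span of the columns A_j for j ∈ [m] \ (S ∪ {q}). -/
import Mathlib


open Finset

/-- Index coding decodability criterion: `b_q` can be recovered from `A b` together with the
side-information entries `b_S` iff the column `A_q` does not lie in the span of the columns
`A_j`, `j ∈ [m] \ (S ∪ {q})`. -/
theorem stmt_0 {F : Type*} [Field F] [Fintype F] {T m : ℕ}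
    (A : Matrix (Fin T) (Fin m) F) (q : Fin m) (S : Finset (Fin m)) (hq : q ∉ S) :
    (∃ f : (Fin T → F) → ({i // i ∈ S} → F) → F,
        ∀ b : Fin m → F, f (A.mulVec b) (fun i => b i.1) = b q) ↔
      (fun i => A i q) ∉
        Submodule.span F ((fun j i => A i j) '' {j : Fin m | j ∉ S ∧ j ≠ q}) := by
  have key : ∀ d : Fin m → F, A.mulVec d = ∑ j, d j • (fun i => A i j) := by
    intro d; funext i
    simp [Matrix.mulVec, dotProduct, Finset.sum_apply, mul_comm]
  classical
  constructor
  · rintro ⟨f, hf⟩ hmem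
    rw [Finsupp.mem_span_image_iff_linearCombination] at hmem
    obtain ⟨l, hl, hlc⟩ := hmem
    set b : Fin m → F := fun j => if j = q then -1 else l j with hb
    have hlq : l q = 0 := by
      by_contra h
      have : q ∈ l.support := Finsupp.mem_support_iff.2 h
      have := hl this
      exact this.2 rfl
    have hlS : ∀ i ∈ S, l i = 0 := by
      intro i hi
      by_contra h
      exact (hl (Finsupp.mem_support_iff.2 h)).1 hi
    have hAb : A.mulVec b = A.mulVec 0 := by
      rw [key, key]
      rw [← Finset.add_sum_erase _ _ (Finset.mem_univ q)]
      have h1 : ∑ j ∈ Finset.univ.erase q, b j • (fun i => A i j) =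
          ∑ j, l j • (fun i => A i j) := by
        rw [← Finset.add_sum_erase _ (fun j => l j • (fun i => A i j)) (Finset.mem_univ q), hlq]
        simp only [zero_smul, zero_add]
        apply Finset.sum_congr rfl
        intro j hj
        have : j ≠ q := (Finset.mem_erase.1 hj).1
        simp [hb, this]
      rw [h1]
      have h2 : ∑ j, l j • (fun i => A i j) = (fun i => A i q) := by
        rw [← hlc]
        rw [Finsupp.linearCombination_apply, Finsupp.sum_fintype]
        intro; simp
      rw [h2]
      simp [hb]
    have h1 := hf b
    have h2 := hf 0
    rw [hAb] at h1
    have hS : (fun i : {i // i ∈ S} => b i.1) = (fun i : {i // i ∈ S} => (0 : Fin m → F) i.1) := by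
      funext i
      have hne : i.1 ≠ q := fun h => hq (h ▸ i.2)
      simp [hb, hne, hlS i.1 i.2]
    rw [hS, h2] at h1
    simp [hb] at h1
  · intro hspan
    refine ⟨fun x y => if h : ∃ b, A.mulVec b = x ∧ ∀ i : {i // i ∈ S}, b i.1 = y i
      then h.choose q else 0, ?_⟩
    intro b
    have hex : ∃ b', A.mulVec b' = A.mulVec b ∧
        ∀ i : {i // i ∈ S}, b' i.1 = b i.1 := ⟨b, rfl, fun _ => rfl⟩
    beta_reduce
    rw [dif_pos hex]
    obtain ⟨hA, hSs⟩ := hex.choose_spec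
    set b' := hex.choose with hb'
    set d : Fin m → F := fun j => b' j - b j with hd
    have hAd : ∑ j, d j • (fun i => A i j) = (0 : Fin T → F) := by
      rw [← key]
      have : A.mulVec d = A.mulVec b' - A.mulVec b := by
        funext i; simp [hd, Matrix.mulVec, dotProduct, mul_sub, Finset.sum_sub_distrib]
      rw [this, hA, sub_self]
    have hdS : ∀ i ∈ S, d i = 0 := fun i hi => by
      simp [hd, hSs ⟨i, hi⟩]
    by_contra hne
    have hdq : d q ≠ 0 := fun h => hne (by simpa [hd, sub_eq_zero] using h)
    apply hspan
    have hsplit : ∑ j, d j • (fun i => A i j) =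
        d q • (fun i => A i q) +
        ∑ j ∈ Finset.univ.filter (fun j => j ∉ S ∧ j ≠ q), d j • (fun i => A i j) := by
      rw [← Finset.add_sum_erase _ _ (Finset.mem_univ q)]
      congr 1
      rw [← Finset.sum_filter_add_sum_filter_not (Finset.univ.erase q) (fun j => j ∉ S ∧ j ≠ q)]
      have hz : ∑ j ∈ (Finset.univ.erase q).filter (fun j => ¬(j ∉ S ∧ j ≠ q)),
          d j • (fun i => A i j) = 0 := by
        apply Finset.sum_eq_zero
        intro j hj
        simp only [Finset.mem_filter, Finset.mem_erase] at hj
        obtain ⟨⟨hjq, _⟩, hj2⟩ := hj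
        push_neg at hj2
        have : j ∈ S := by
          by_contra h
          exact hjq (hj2 h)
        rw [hdS j this, zero_smul]
      rw [hz, add_zero]
      congr 1
      ext j
      simp only [Finset.mem_filter, Finset.mem_erase, Finset.mem_univ]
      tauto
    have heq : (fun i => A i q) = (-(d q)⁻¹) •
        ∑ j ∈ Finset.univ.filter (fun j => j ∉ S ∧ j ≠ q), d j • (fun i => A i j) := by
      rw [hsplit] at hAd
      have h3 := eq_neg_of_add_eq_zero_left hAd
      calc (fun i => A i q) = (d q)⁻¹ • (d q • fun i => A i q) := by
            rw [smul_smul, inv_mul_cancel₀ hdq, one_smul]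
        _ = -(d q)⁻¹ • ∑ j ∈ Finset.univ.filter (fun j => j ∉ S ∧ j ≠ q),
              d j • (fun i => A i j) := by rw [h3, smul_neg, neg_smul]
    rw [heq]
    apply Submodule.smul_mem
    apply Submodule.sum_smul_mem
    intro j hj
    apply Submodule.subset_span
    exact ⟨j, by simpa using hj, rfl⟩
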